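/- For every n ≥ 2 there exist an axis-aligned 2n-gon P : ℤ/2n → ℝ² and a parallel lifting L(i,j) ∈ ℝⁿ (for 0 ≤ i ≤ n−2, 0 ≤ j ≤ n−1) of the sequences A_i(j) = P(i + 2j) — meaning that the first two coordinates of L(i,j) are the coordinates of P(i+2j) and for every j the last n−2 coordinates of L(i,j) are independent of i — such that the affine spans |Ã_i| = affineSpan{L(i,0), …, L(i,n−1)} are hyperplanes of ℝⁿ in general position: for every nonempty subset S ⊆ {0, …, n−2}, the intersection ⋂_{i ∈ S} |Ã_i| is an affine subspace of ℝⁿ of dimension n − |S| (in particular each |Ã_i| has dimension n − 1). -/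

import Mathlib

/-- An axis-aligned `2n`-gon: the edge `P(i+1) - P(i)` is horizontal when `i` is even
and vertical when `i` is odd. -/
def IsAxisAligned2 (n : ℕ) (P : ZMod (2 * n) → (Fin 2 → ℝ)) : Prop :=
  ∀ i : ZMod (2 * n),
    (Even i.val → (P (i + 1) - P i) 1 = 0) ∧
    (¬ Even i.val → (P (i + 1) - P i) 0 = 0)

namespace GPL

/-- value of the cyclic "arithmetic" sequence. -/
noncomputable def av (n m : ℕ) : ℝ := ((m % n : ℕ) : ℝ)

/-- discrete derivative of `av`. -/
noncomputable def dd (n m : ℕ) : ℝ := av n (m+1) - av n m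

def sg (n : ℕ) : ℕ := (n-1)/2

def sA (n i : ℕ) : ℕ := (i + (2*n-1))/2

def sB (n i : ℕ) : ℕ := i/2 + sg n

def isA (n s : ℕ) : Prop := s % n = n-1 ∨ s % n < sg n

instance (n s : ℕ) : Decidable (isA n s) := by unfold isA; infer_instance

/-- the "letter" vectors. -/
noncomputable def Wv (n s : ℕ) : Fin n → ℝ := fun t =>
  if (t:ℕ) = 0 then (if isA n s then 1 else 0)
  else if (t:ℕ) = 1 then (if isA n s then 0 else 1)
  else av n s - av n (s + t)

/-- normal vector of the i-th hyperplane. -/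
noncomputable def vv (n i : ℕ) : Fin n → ℝ := fun t =>
  dd n (sB n i) * Wv n (sA n i) t - dd n (sA n i) * Wv n (sB n i) t

/-- the lifted points. -/
noncomputable def Lv (n i j : ℕ) : Fin n → ℝ := fun t =>
  if (t:ℕ) = 0 then av n (sA n i + j)
  else if (t:ℕ) = 1 then av n (sB n i + j)
  else if j = (t:ℕ) then 1 else 0

/-- the polygon. -/
noncomputable def Pv (n : ℕ) : ZMod (2*n) → Fin 2 → ℝ := fun k c =>
  if (c:ℕ) = 0 then av n ((k.val + (2*n-1))/2) else av n (k.val/2 + sg n)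

noncomputable def cc (n i : ℕ) : ℝ :=
  dd n (sB n i) * av n (sA n i) - dd n (sA n i) * av n (sB n i)

lemma av_mod (n m : ℕ) : av n (m % n) = av n m := by
  simp [av, Nat.mod_mod_of_dvd]

lemma av_add_mul (n q y : ℕ) : av n (y + n*q) = av n y := by
  simp [av, Nat.add_mul_mod_self_left]

lemma av_succ (n m : ℕ) : av n (m+1) = av n m + dd n m := by
  simp [dd]

lemma av_lt (n m : ℕ) (h : m < n) : av n m = (m : ℝ) := by
  simp [av, Nat.mod_eq_of_lt h]

lemma dd_eq (n : ℕ) (hn : 2 ≤ n) (m : ℕ) :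
    dd n m = if m % n = n - 1 then 1 - (n:ℝ) else 1 := by
  have h1 : (m+1) % n = (m % n + 1) % n := by
    conv_lhs => rw [Nat.add_mod]
    rw [show 1 % n = 1 from Nat.mod_eq_of_lt (by omega)]
  have hm : m % n < n := Nat.mod_lt _ (by omega)
  unfold dd av
  split
  · next h =>
    rw [h1, h]
    have : (n - 1 + 1) % n = 0 := by
      have : n - 1 + 1 = n := by omega
      rw [this, Nat.mod_self]
    rw [this]
    push_cast [Nat.cast_sub (by omega : 1 ≤ n)]
    ring
  · next h =>
    rw [h1, Nat.mod_eq_of_lt (by omega)]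
    push_cast
    ring

lemma dd_ne (n : ℕ) (hn : 2 ≤ n) (m : ℕ) : dd n m ≠ 0 := by
  rw [dd_eq n hn m]
  split
  · intro h
    have hn1 : (n:ℝ) = 1 := by linarith
    have : n = 1 := by exact_mod_cast hn1
    omega
  · norm_num


-- chunk 2

lemma sA_eq_zero (n : ℕ) (hn : 2 ≤ n) : sA n 0 = n - 1 := by unfold sA; omega

lemma sA_eq_pos (n i : ℕ) (hn : 2 ≤ n) (hi : 1 ≤ i) : sA n i = (i-1)/2 + n := by
  unfold sA; omega

lemma sA_mod (n i : ℕ) (hn : 2 ≤ n) (hi : i < n - 1) :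
    sA n i % n = if i = 0 then n-1 else (i-1)/2 := by
  split
  · next h => subst h; rw [sA_eq_zero n hn]; exact Nat.mod_eq_of_lt (by omega)
  · next h =>
    rw [sA_eq_pos n i hn (by omega), Nat.add_mod_right]
    exact Nat.mod_eq_of_lt (by omega)

lemma sB_mod (n i : ℕ) (hn : 2 ≤ n) (hi : i < n - 1) : sB n i % n = i/2 + sg n := by
  apply Nat.mod_eq_of_lt; unfold sB sg; omega

lemma sB_le (n i : ℕ) (hn : 2 ≤ n) (hi : i < n - 1) : i/2 + sg n ≤ n - 2 := by
  unfold sg; omega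

lemma isA_sA (n i : ℕ) (hn : 2 ≤ n) (hi : i < n - 1) : isA n (sA n i) := by
  unfold isA
  rw [sA_mod n i hn hi]
  split
  · exact Or.inl rfl
  · next h => right; unfold sg; omega

lemma not_isA_sB (n i : ℕ) (hn : 2 ≤ n) (hi : i < n - 1) : ¬ isA n (sB n i) := by
  unfold isA
  rw [sB_mod n i hn hi]
  have h1 := sB_le n i hn hi
  rintro (h | h)
  · omega
  · omega

lemma pair_L (n : ℕ) (hn : 2 ≤ n) {i j : ℕ} (hi : i < n-1) (hj : j < n) :
    ∑ t : Fin n, vv n i t * Lv n i j t = cc n i := by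
  have h0n : 0 < n := by omega
  have h1n : 1 < n := by omega
  set f0 : Fin n := ⟨0, h0n⟩ with hf0
  set f1 : Fin n := ⟨1, h1n⟩ with hf1
  have e1 : vv n i f0 = dd n (sB n i) := by
    simp [vv, Wv, hf0, if_pos (isA_sA n i hn hi), if_neg (not_isA_sB n i hn hi)]
  have e2 : vv n i f1 = -dd n (sA n i) := by
    simp [vv, Wv, hf1, if_pos (isA_sA n i hn hi), if_neg (not_isA_sB n i hn hi)]
  have e3 : Lv n i j f0 = av n (sA n i + j) := by simp [Lv, hf0]
  have e4 : Lv n i j f1 = av n (sB n i + j) := by simp [Lv, hf1]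
  have hne : f1 ≠ f0 := by simp [hf0, hf1, Fin.ext_iff]
  rw [← Finset.add_sum_erase _ _ (Finset.mem_univ f0),
      ← Finset.add_sum_erase _ _ (Finset.mem_erase.mpr ⟨hne, Finset.mem_univ f1⟩)]
  have hrest : ∀ t ∈ (Finset.univ.erase f0).erase f1,
      vv n i t * Lv n i j t = if j = (t:ℕ) then vv n i t else 0 := by
    intro t ht
    have ht1 : t ≠ f1 := (Finset.mem_erase.mp ht).1
    have ht0 : t ≠ f0 := (Finset.mem_erase.mp (Finset.mem_erase.mp ht).2).1
    have hv0 : (t:ℕ) ≠ 0 := fun h => ht0 (Fin.ext h)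
    have hv1 : (t:ℕ) ≠ 1 := fun h => ht1 (Fin.ext h)
    rw [show Lv n i j t = if j = (t:ℕ) then 1 else 0 by simp [Lv, hv0, hv1]]
    split <;> ring
  rw [Finset.sum_congr rfl hrest]
  rcases Nat.lt_or_ge j 2 with hj2 | hj2
  · have hzero : ∀ t ∈ (Finset.univ.erase f0).erase f1,
        (if j = (t:ℕ) then vv n i t else 0) = 0 := by
      intro t ht
      have ht1 : t ≠ f1 := (Finset.mem_erase.mp ht).1
      have ht0 : t ≠ f0 := (Finset.mem_erase.mp (Finset.mem_erase.mp ht).2).1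
      have hv0 : (t:ℕ) ≠ 0 := fun h => ht0 (Fin.ext h)
      have hv1 : (t:ℕ) ≠ 1 := fun h => ht1 (Fin.ext h)
      rw [if_neg]; omega
    rw [Finset.sum_eq_zero hzero]
    interval_cases j
    · rw [e1, e2, e3, e4]
      simp only [Nat.add_zero]
      unfold cc; ring
    · rw [e1, e2, e3, e4, av_succ n (sA n i), av_succ n (sB n i)]
      unfold cc; ring
  · have hjmem : (⟨j, hj⟩ : Fin n) ∈ (Finset.univ.erase f0).erase f1 := by
      rw [Finset.mem_erase, Finset.mem_erase]
      refine ⟨?_, ?_, Finset.mem_univ _⟩ <;> simp [hf0, hf1, Fin.ext_iff] <;> omega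
    rw [Finset.sum_eq_single_of_mem _ hjmem (fun t _ htj => by
      rw [if_neg]; intro h; exact htj (Fin.ext h.symm))]
    rw [if_pos rfl]
    have e5 : vv n i ⟨j, hj⟩ =
        dd n (sB n i) * (av n (sA n i) - av n (sA n i + j))
          - dd n (sA n i) * (av n (sB n i) - av n (sB n i + j)) := by
      have : (((⟨j, hj⟩ : Fin n)):ℕ) = j := rfl
      simp only [vv, Wv, this, if_neg (by omega : ¬ j = 0), if_neg (by omega : ¬ j = 1)]
    rw [e1, e2, e3, e4, e5]
    unfold cc; ring

-- chunk 3 : independence of the letters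
lemma W_core (n : ℕ) (hn : 2 ≤ n) (c : ℕ → ℝ)
    (h : ∀ t : Fin n, ∑ s ∈ Finset.range n, c s * Wv n s t = 0) :
    ∀ s < n, c s = 0 := by
  have h0n : 0 < n := by omega
  have h1n : 1 < n := by omega
  have hσval : sg n = (n-1)/2 := rfl
  have hσ2 : sg n ≤ n - 2 := by omega
  -- coordinate 0 equation
  have E0 : c (n-1) + ∑ s ∈ Finset.range (sg n), c s = 0 := by
    have h0 := h ⟨0, h0n⟩
    have hW : ∀ s, Wv n s ⟨0, h0n⟩ = if isA n s then (1:ℝ) else 0 := by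
      intro s; simp [Wv]
    simp only [hW] at h0
    rw [Finset.sum_congr rfl (fun s _ => by
        rw [mul_ite, mul_one, mul_zero] : ∀ s ∈ Finset.range n,
        c s * (if isA n s then (1:ℝ) else 0) = if isA n s then c s else 0)] at h0
    rw [← Finset.sum_filter] at h0
    have hfilter : Finset.filter (fun s => isA n s) (Finset.range n)
        = insert (n-1) (Finset.range (sg n)) := by
      ext s
      rw [Finset.mem_filter]
      simp only [Finset.mem_range, Finset.mem_insert, isA]
      constructor
      · rintro ⟨hs, hor⟩
        rw [Nat.mod_eq_of_lt hs] at hor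
        exact hor
      · rintro (hs | hs)
        · exact ⟨by omega, by rw [Nat.mod_eq_of_lt (by omega)]; left; omega⟩
        · exact ⟨by omega, by rw [Nat.mod_eq_of_lt (by omega)]; right; omega⟩
    rw [hfilter, Finset.sum_insert (by simp [Finset.mem_range]; omega)] at h0
    exact h0
  -- coordinate 1 equation
  have E1 : ∑ s ∈ Finset.Ico (sg n) (n-1), c s = 0 := by
    have h1 := h ⟨1, h1n⟩
    have hW : ∀ s, Wv n s ⟨1, h1n⟩ = if isA n s then (0:ℝ) else 1 := by
      intro s; simp [Wv]
    simp only [hW] at h1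
    rw [Finset.sum_congr rfl (fun s _ => by
        rw [mul_ite, mul_one, mul_zero, ite_not] : ∀ s ∈ Finset.range n,
        c s * (if isA n s then (0:ℝ) else 1) = if ¬ isA n s then c s else 0)] at h1
    rw [← Finset.sum_filter] at h1
    have hfilter : Finset.filter (fun s => ¬ isA n s) (Finset.range n)
        = Finset.Ico (sg n) (n-1) := by
      ext s
      simp only [Finset.mem_filter, Finset.mem_range, Finset.mem_Ico, isA, not_or, not_lt]
      constructor
      · rintro ⟨hs, hor⟩
        rw [Nat.mod_eq_of_lt hs] at hor
        omega
      · intro hs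
        refine ⟨by omega, ?_⟩
        rw [Nat.mod_eq_of_lt (by omega)]
        omega
    rw [hfilter] at h1
    exact h1
  -- total sum
  have hC : ∑ s ∈ Finset.range n, c s = 0 := by
    rw [← Finset.sum_filter_add_sum_filter_not (Finset.range n) (fun s => isA n s)]
    have hfA : ∑ s ∈ Finset.filter (fun s => isA n s) (Finset.range n), c s
        = c (n-1) + ∑ s ∈ Finset.range (sg n), c s := by
      have hfilter : Finset.filter (fun s => isA n s) (Finset.range n)
          = insert (n-1) (Finset.range (sg n)) := by
        ext s
        rw [Finset.mem_filter]
        simp only [Finset.mem_range, Finset.mem_insert, isA]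
        constructor
        · rintro ⟨hs, hor⟩
          rw [Nat.mod_eq_of_lt hs] at hor
          exact hor
        · rintro (hs | hs)
          · exact ⟨by omega, by rw [Nat.mod_eq_of_lt (by omega)]; left; omega⟩
          · exact ⟨by omega, by rw [Nat.mod_eq_of_lt (by omega)]; right; omega⟩
      rw [hfilter, Finset.sum_insert (by simp [Finset.mem_range]; omega)]
    have hfB : ∑ s ∈ Finset.filter (fun s => ¬ isA n s) (Finset.range n), c s
        = ∑ s ∈ Finset.Ico (sg n) (n-1), c s := by
      congr 1
      ext s
      simp only [Finset.mem_filter, Finset.mem_range, Finset.mem_Ico, isA, not_or, not_lt]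
      constructor
      · rintro ⟨hs, hor⟩
        rw [Nat.mod_eq_of_lt hs] at hor
        omega
      · intro hs
        refine ⟨by omega, ?_⟩
        rw [Nat.mod_eq_of_lt (by omega)]
        omega
    rw [hfA, hfB]
    linarith
  -- partial sums
  have hT : ∀ t, 2 ≤ t → t < n → ∑ s ∈ Finset.Ico (n-t) n, c s = 0 := by
    intro t h2t htn
    have ht := h ⟨t, htn⟩
    have hW : ∀ s, Wv n s ⟨t, htn⟩ = av n s - av n (s + t) := by
      intro s
      simp only [Wv]
      rw [if_neg (show ¬ (t = 0) by omega), if_neg (show ¬ (t = 1) by omega)]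
    simp only [hW] at ht
    rw [Finset.range_eq_Ico,
      ← Finset.sum_Ico_consecutive _ (by omega : 0 ≤ n - t) (by omega : n - t ≤ n)] at ht
    have hlow : ∑ s ∈ Finset.Ico 0 (n-t), c s * (av n s - av n (s + t))
        = (∑ s ∈ Finset.Ico 0 (n-t), c s) * (-(t:ℝ)) := by
      rw [Finset.sum_mul]
      apply Finset.sum_congr rfl
      intro s hs
      rw [Finset.mem_Ico] at hs
      rw [av_lt n s (by omega), av_lt n (s+t) (by omega)]
      push_cast
      ring
    have hhigh : ∑ s ∈ Finset.Ico (n-t) n, c s * (av n s - av n (s + t))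
        = (∑ s ∈ Finset.Ico (n-t) n, c s) * ((n:ℝ) - t) := by
      rw [Finset.sum_mul]
      apply Finset.sum_congr rfl
      intro s hs
      rw [Finset.mem_Ico] at hs
      have hst : (s + t) % n = s + t - n := by
        rw [Nat.mod_eq_sub_mod (by omega), Nat.mod_eq_of_lt (by omega)]
      have havst : av n (s + t) = ((s + t - n : ℕ) : ℝ) := by
        rw [av, hst]
      rw [av_lt n s (by omega), havst]
      have : ((s + t - n : ℕ) : ℝ) = (s:ℝ) + t - n := by
        push_cast [Nat.cast_sub (by omega : n ≤ s + t)]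
        ring
      rw [this]
      ring
    rw [hlow, hhigh] at ht
    have hCsplit : (∑ s ∈ Finset.Ico 0 (n-t), c s) + (∑ s ∈ Finset.Ico (n-t) n, c s) = 0 := by
      rw [Finset.sum_Ico_consecutive _ (by omega : 0 ≤ n - t) (by omega : n - t ≤ n),
        ← Finset.range_eq_Ico]
      exact hC
    set X := ∑ s ∈ Finset.Ico 0 (n-t), c s
    set Y := ∑ s ∈ Finset.Ico (n-t) n, c s
    have hXY : X = -Y := by linarith
    rw [hXY] at ht
    have hYn : Y * (n:ℝ) = 0 := by ring_nf at ht ⊢; linarith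
    have : (n:ℝ) ≠ 0 := by positivity
    exact (mul_eq_zero.mp hYn).resolve_right this
  -- middle coefficients
  have hmid : ∀ s, 1 ≤ s → s + 3 ≤ n → c s = 0 := by
    intro s h1s h3s
    have ht1 := hT (n-1-s) (by omega) (by omega)
    have ht2 := hT (n-1-s+1) (by omega) (by omega)
    have e1 : n - (n-1-s) = s + 1 := by omega
    have e2 : n - (n-1-s+1) = s := by omega
    rw [e1] at ht1
    rw [e2] at ht2
    rw [Finset.sum_eq_sum_Ico_succ_bot (by omega : s < n)] at ht2
    rw [ht1] at ht2
    linarith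
  -- c (n-2)
  have hn2 : c (n-2) = 0 := by
    have hrw : n - 1 = (n-2) + 1 := by omega
    rw [hrw, Finset.sum_Ico_succ_top hσ2] at E1
    have hz : ∑ s ∈ Finset.Ico (sg n) (n-2), c s = 0 := by
      apply Finset.sum_eq_zero
      intro s hs
      rw [Finset.mem_Ico] at hs
      exact hmid s (by omega) (by omega)
    rw [hz] at E1
    linarith
  -- c (n-1)
  have hn1 : c (n-1) = 0 := by
    by_cases hn3 : n < 3
    · have hn2' : n = 2 := by omega
      subst hn2'
      have hsg : sg 2 = 0 := rfl
      rw [hsg] at E0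
      simpa using E0
    · have ht2 := hT 2 (le_refl 2) (by omega)
      rw [Finset.sum_eq_sum_Ico_succ_bot (by omega : n - 2 < n)] at ht2
      have e1 : n - 2 + 1 = n - 1 := by omega
      rw [e1, Finset.sum_eq_sum_Ico_succ_bot (by omega : n - 1 < n)] at ht2
      have e2 : n - 1 + 1 = n := by omega
      rw [e2, Finset.Ico_self, Finset.sum_empty] at ht2
      linarith
  -- c 0
  have h00 : c 0 = 0 := by
    by_cases hσ0 : sg n = 0
    · have : n = 2 := by omega
      subst this
      simpa using hn2
    · rw [Finset.range_eq_Ico, Finset.sum_eq_sum_Ico_succ_bot (by omega : 0 < sg n)] at E0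
      have hz : ∑ s ∈ Finset.Ico (0+1) (sg n), c s = 0 := by
        apply Finset.sum_eq_zero
        intro s hs
        rw [Finset.mem_Ico] at hs
        exact hmid s (by omega) (by omega)
      rw [hz] at E0
      linarith
  intro s hs
  have : s = 0 ∨ (1 ≤ s ∧ s + 3 ≤ n) ∨ s = n-2 ∨ s = n-1 := by omega
  rcases this with h' | ⟨h1, h2⟩ | h' | h'
  · rw [h']; exact h00
  · exact hmid s h1 h2
  · rw [h']; exact hn2
  · rw [h']; exact hn1


-- chunk 4 : solvability of the letter system
lemma W_li (n : ℕ) (hn : 2 ≤ n) :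
    LinearIndependent ℝ (fun s : Fin n => Wv n (s:ℕ)) := by
  rw [Fintype.linearIndependent_iff]
  intro g hg s
  set cN : ℕ → ℝ := fun m => if h : m < n then g ⟨m, h⟩ else 0 with hcN
  have hcore : ∀ m < n, cN m = 0 := by
    apply W_core n hn
    intro t
    have h1 : ∑ m ∈ Finset.range n, cN m * Wv n m t
        = ∑ s : Fin n, g s * Wv n (s:ℕ) t := by
      rw [← Fin.sum_univ_eq_sum_range (fun m => cN m * Wv n m t) n]
      apply Finset.sum_congr rfl
      intro x _
      simp [hcN, x.isLt]
    rw [h1]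
    have := congrFun hg t
    simpa [Finset.sum_apply] using this
  have := hcore (s:ℕ) s.isLt
  simpa [hcN, s.isLt] using this

lemma W_solve (n : ℕ) (hn : 2 ≤ n) (y : Fin n → ℝ) :
    ∃ u : Fin n → ℝ, ∀ s : Fin n, ∑ t, Wv n (s:ℕ) t * u t = y s := by
  set Ψ : (Fin n → ℝ) →ₗ[ℝ] (Fin n → ℝ) :=
    { toFun := fun u => fun s => ∑ t, Wv n (s:ℕ) t * u t
      map_add' := by
        intro u v; funext s; simp [mul_add, Finset.sum_add_distrib]
      map_smul' := by
        intro c u; funext s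
        simp only [RingHom.id_apply, Pi.smul_apply, smul_eq_mul, Finset.mul_sum]
        apply Finset.sum_congr rfl
        intro t _; ring } with hΨ
  have hspan : Submodule.span ℝ (Set.range fun s : Fin n => Wv n (s:ℕ)) = ⊤ := by
    have hcard : Fintype.card (Fin n) = Module.finrank ℝ (Fin n → ℝ) := by
      simp [Module.finrank_fin_fun]
    haveI : Nonempty (Fin n) := ⟨⟨0, by omega⟩⟩
    rw [← coe_basisOfLinearIndependentOfCardEqFinrank (W_li n hn) hcard]
    exact (basisOfLinearIndependentOfCardEqFinrank (W_li n hn) hcard).span_eq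
  have hinj : Function.Injective Ψ := by
    rw [← LinearMap.ker_eq_bot]
    rw [Submodule.eq_bot_iff]
    intro u hu
    have hu' : ∀ s : Fin n, ∑ t, Wv n (s:ℕ) t * u t = 0 := by
      intro s
      have := congrFun (LinearMap.mem_ker.mp hu) s
      simpa [hΨ] using this
    have hx : ∀ x : Fin n → ℝ, x ∈ Submodule.span ℝ (Set.range fun s : Fin n => Wv n (s:ℕ))
        → ∑ t, x t * u t = 0 := by
      intro x hxmem
      induction hxmem using Submodule.span_induction with
      | mem x hxr =>
        obtain ⟨s, rfl⟩ := hxr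
        exact hu' s
      | zero => simp
      | add x y _ _ hx hy =>
        rw [show ∑ t, (x + y) t * u t = (∑ t, x t * u t) + ∑ t, y t * u t by
          rw [← Finset.sum_add_distrib]; apply Finset.sum_congr rfl; intro t _
          simp [add_mul]]
        rw [hx, hy]; ring
      | smul a x _ hx =>
        rw [show ∑ t, (a • x) t * u t = a * ∑ t, x t * u t by
          rw [Finset.mul_sum]; apply Finset.sum_congr rfl; intro t _
          simp [mul_assoc]]
        rw [hx]; ring
    funext t0
    have h1 : ∑ t, (Pi.single t0 (1:ℝ) : Fin n → ℝ) t * u t = 0 := by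
      apply hx
      rw [hspan]; trivial
    simp only [Pi.single_apply, ite_mul, one_mul, zero_mul] at h1
    rw [Finset.sum_ite_eq' Finset.univ t0 u] at h1
    simpa using h1
  have hsurj := (LinearMap.injective_iff_surjective).mp hinj
  obtain ⟨u, hu⟩ := hsurj y
  refine ⟨u, fun s => ?_⟩
  have := congrFun hu s
  simpa [hΨ] using this

-- chunk 5 : dual vectors
def pth (n m : ℕ) : ℕ := if m = 0 then n-1 else if m % 2 = 1 then sg n + m/2 else m/2 - 1

lemma pth_lt (n : ℕ) (hn : 2 ≤ n) {m : ℕ} (hm : m < n) : pth n m < n := by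
  unfold pth sg; split_ifs <;> omega

lemma pth_inj (n : ℕ) (hn : 2 ≤ n) {m1 m2 : ℕ} (h : pth n m1 = pth n m2)
    (h1 : m1 < n) (h2 : m2 < n) : m1 = m2 := by
  unfold pth sg at h; split_ifs at h <;> omega

lemma shiftA (n i : ℕ) (hn : 2 ≤ n) (hi : i < n-1) :
    sA n i % n = pth n (if i % 2 = 0 then i else i+1) := by
  rw [sA_mod n i hn hi]
  by_cases h2 : i % 2 = 0
  · rw [if_pos h2]; unfold pth sg; split_ifs <;> first | contradiction | omega
  · rw [if_neg h2]; unfold pth sg; split_ifs <;> first | contradiction | omega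

lemma shiftB (n i : ℕ) (hn : 2 ≤ n) (hi : i < n-1) :
    sB n i % n = pth n (if i % 2 = 0 then i+1 else i) := by
  rw [sB_mod n i hn hi]
  by_cases h2 : i % 2 = 0
  · rw [if_pos h2]; unfold pth sg; split_ifs <;> first | contradiction | omega
  · rw [if_neg h2]; unfold pth sg; split_ifs <;> first | contradiction | omega

lemma Wv_mod (n s : ℕ) : Wv n s = Wv n (s % n) := by
  funext t
  have e1 : s % n % n = s % n := Nat.mod_mod_of_dvd s dvd_rfl
  have e2 : (s % n + (t:ℕ)) % n = (s + (t:ℕ)) % n := Nat.mod_add_mod s n (t:ℕ)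
  simp only [Wv, isA, av, e1, e2]

lemma pair_expand (n i : ℕ) (u : Fin n → ℝ) :
    ∑ t, vv n i t * u t
      = dd n (sB n i) * (∑ t, Wv n (sA n i) t * u t)
        - dd n (sA n i) * (∑ t, Wv n (sB n i) t * u t) := by
  simp only [vv]
  rw [Finset.mul_sum, Finset.mul_sum, ← Finset.sum_sub_distrib]
  apply Finset.sum_congr rfl
  intro t _; ring

lemma dual (n : ℕ) (hn : 2 ≤ n) (k : ℕ) (hk : k < n-1) :
    ∃ u : Fin n → ℝ,
      (∀ i < n-1, i < k → ∑ t, vv n i t * u t = 0) ∧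
      (∑ t, vv n k t * u t ≠ 0) := by
  obtain ⟨u, hu⟩ := W_solve n hn (fun s => if (s:ℕ) = pth n (k+1) then (1:ℝ) else 0)
  have hpair : ∀ i < n-1, ∑ t, vv n i t * u t
      = dd n (sB n i) * (if sA n i % n = pth n (k+1) then 1 else 0)
        - dd n (sA n i) * (if sB n i % n = pth n (k+1) then 1 else 0) := by
    intro i hi
    rw [pair_expand]
    have hA : ∑ t, Wv n (sA n i) t * u t = (if sA n i % n = pth n (k+1) then (1:ℝ) else 0) := by
      rw [Wv_mod]
      have hlt : sA n i % n < n := Nat.mod_lt _ (by omega)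
      have := hu ⟨sA n i % n, hlt⟩
      simpa using this
    have hB : ∑ t, Wv n (sB n i) t * u t = (if sB n i % n = pth n (k+1) then (1:ℝ) else 0) := by
      rw [Wv_mod]
      have hlt : sB n i % n < n := Nat.mod_lt _ (by omega)
      have := hu ⟨sB n i % n, hlt⟩
      simpa using this
    rw [hA, hB]
  refine ⟨u, ?_, ?_⟩
  · intro i hi hik
    rw [hpair i hi]
    have hAi : sA n i % n ≠ pth n (k+1) := by
      rw [shiftA n i hn hi]
      intro h
      have := pth_inj n hn h (by split_ifs <;> omega) (by omega)
      split_ifs at this <;> omega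
    have hBi : sB n i % n ≠ pth n (k+1) := by
      rw [shiftB n i hn hi]
      intro h
      have := pth_inj n hn h (by split_ifs <;> omega) (by omega)
      split_ifs at this <;> omega
    rw [if_neg hAi, if_neg hBi]
    ring
  · rw [hpair k hk]
    by_cases hke : k % 2 = 0
    · have hAk : sA n k % n ≠ pth n (k+1) := by
        rw [shiftA n k hn hk, if_pos hke]
        intro h
        have := pth_inj n hn h (by omega) (by omega)
        omega
      have hBk : sB n k % n = pth n (k+1) := by
        rw [shiftB n k hn hk, if_pos hke]
      rw [if_neg hAk, if_pos hBk]
      simpa using dd_ne n hn (sA n k)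
    · have hAk : sA n k % n = pth n (k+1) := by
        rw [shiftA n k hn hk, if_neg hke]
      have hBk : sB n k % n ≠ pth n (k+1) := by
        rw [shiftB n k hn hk, if_neg hke]
        intro h
        have := pth_inj n hn h (by omega) (by omega)
        omega
      rw [if_pos hAk, if_neg hBk]
      simpa using dd_ne n hn (sB n k)


-- chunk 6 : solving the system on any S
lemma pair_add (n i : ℕ) (x y : Fin n → ℝ) :
    ∑ t, vv n i t * (x + y) t = (∑ t, vv n i t * x t) + ∑ t, vv n i t * y t := by
  rw [← Finset.sum_add_distrib]
  apply Finset.sum_congr rfl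
  intro t _
  simp [mul_add]

lemma pair_smul (n i : ℕ) (cst : ℝ) (x : Fin n → ℝ) :
    ∑ t, vv n i t * (cst • x) t = cst * ∑ t, vv n i t * x t := by
  rw [Finset.mul_sum]
  apply Finset.sum_congr rfl
  intro t _
  simp; ring

lemma exists_sol (n : ℕ) (hn : 2 ≤ n) (w : ℕ → ℝ) (S : Finset ℕ)
    (hS : ∀ i ∈ S, i < n-1) :
    ∃ x : Fin n → ℝ, ∀ i ∈ S, ∑ t, vv n i t * x t = w i := by
  classical
  revert hS
  induction S using Finset.induction_on_max with
  | empty => intro _; exact ⟨0, by simp⟩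
  | insert a s hmax ih =>
    intro hS
    obtain ⟨x', hx'⟩ := ih (fun i hi => hS i (Finset.mem_insert_of_mem hi))
    have hka : a < n - 1 := hS a (Finset.mem_insert_self a s)
    obtain ⟨u, hu0, hud⟩ := dual n hn a hka
    refine ⟨x' + ((w a - ∑ t, vv n a t * x' t) / (∑ t, vv n a t * u t)) • u, ?_⟩
    intro i hi
    rcases Finset.mem_insert.mp hi with rfl | his
    · rw [pair_add, pair_smul]
      field_simp
      ring
    · rw [pair_add, pair_smul, hx' i his, hu0 i (hS i hi) (hmax i his)]
      ring



-- chunk 7 : the affine span of each lifted sequence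
noncomputable def Fl (n i : ℕ) : (Fin n → ℝ) →ₗ[ℝ] ℝ where
  toFun := fun x => ∑ t, vv n i t * x t
  map_add' := fun x y => pair_add n i x y
  map_smul' := fun c x => by simpa using pair_smul n i c x

lemma Fl_apply (n i : ℕ) (x : Fin n → ℝ) : Fl n i x = ∑ t, vv n i t * x t := rfl

lemma Lv_val (n i j m : ℕ) (hm : m < n) :
    Lv n i j ⟨m, hm⟩ =
      if m = 0 then av n (sA n i + j)
      else if m = 1 then av n (sB n i + j)
      else if j = m then 1 else 0 := rfl

lemma vv_one (n : ℕ) (hn : 2 ≤ n) {i : ℕ} (hi : i < n-1) (h1n : 1 < n) :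
    vv n i ⟨1, h1n⟩ = -dd n (sA n i) := by
  simp [vv, Wv, if_pos (isA_sA n i hn hi), if_neg (not_isA_sB n i hn hi)]

lemma Fl_surj (n : ℕ) (hn : 2 ≤ n) {i : ℕ} (hi : i < n-1) :
    Function.Surjective (Fl n i) := by
  intro r
  have h1n : 1 < n := by omega
  refine ⟨(r / -dd n (sA n i)) • (Pi.single (⟨1, h1n⟩ : Fin n) (1:ℝ) : Fin n → ℝ), ?_⟩
  rw [map_smul]
  have hFe : Fl n i (Pi.single (⟨1, h1n⟩ : Fin n) (1:ℝ) : Fin n → ℝ)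
      = -dd n (sA n i) := by
    rw [Fl_apply]
    simp only [Pi.single_apply, mul_ite, mul_one, mul_zero]
    rw [Finset.sum_ite_eq' Finset.univ (⟨1, h1n⟩ : Fin n) (vv n i)]
    simpa using vv_one n hn hi h1n
  rw [hFe]
  have hdd : dd n (sA n i) ≠ 0 := dd_ne n hn (sA n i)
  rw [smul_eq_mul]
  field_simp

lemma diff_li (n : ℕ) (hn : 2 ≤ n) {i : ℕ} (hi : i < n-1) :
    LinearIndependent ℝ (fun j : Fin (n-1) => Lv n i ((j:ℕ)+1) - Lv n i 0) := by
  have h0n : 0 < n := by omega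
  rw [Fintype.linearIndependent_iff]
  intro μ hμ
  have hstep1 : ∀ j : Fin (n-1), 1 ≤ (j:ℕ) → μ j = 0 := by
    intro j hj1
    have hjn : (j:ℕ)+1 < n := by omega
    have hco := congrFun hμ ⟨(j:ℕ)+1, hjn⟩
    rw [Finset.sum_apply] at hco
    simp only [Pi.zero_apply] at hco
    rw [Finset.sum_eq_single j (fun j' _ hj' => ?_) (by
      intro habs; exact absurd (Finset.mem_univ j) habs)] at hco
    · have e1 : Lv n i ((j:ℕ)+1) ⟨(j:ℕ)+1, hjn⟩ = 1 := by
        rw [Lv_val n i ((j:ℕ)+1) ((j:ℕ)+1) hjn,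
          if_neg (by omega), if_neg (by omega), if_pos rfl]
      have e2 : Lv n i 0 ⟨(j:ℕ)+1, hjn⟩ = 0 := by
        rw [Lv_val n i 0 ((j:ℕ)+1) hjn,
          if_neg (by omega), if_neg (by omega), if_neg (by omega)]
      simpa [e1, e2] using hco
    · have hjj' : ¬ ((j':ℕ)+1 = (j:ℕ)+1) := by
        intro h
        exact hj' (Fin.ext (by omega))
      have e1 : Lv n i ((j':ℕ)+1) ⟨(j:ℕ)+1, hjn⟩ = 0 := by
        rw [Lv_val n i ((j':ℕ)+1) ((j:ℕ)+1) hjn,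
          if_neg (by omega), if_neg (by omega), if_neg hjj']
      have e2 : Lv n i 0 ⟨(j:ℕ)+1, hjn⟩ = 0 := by
        rw [Lv_val n i 0 ((j:ℕ)+1) hjn,
          if_neg (by omega), if_neg (by omega), if_neg (by omega)]
      simp [e1, e2]
  have hn1 : 0 < n - 1 := by omega
  have hstep0 : μ ⟨0, hn1⟩ = 0 := by
    have hco := congrFun hμ ⟨0, h0n⟩
    rw [Finset.sum_apply] at hco
    simp only [Pi.zero_apply] at hco
    rw [Finset.sum_eq_single (⟨0, hn1⟩ : Fin (n-1)) (fun j' _ hj' => by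
      rw [hstep1 j' (by
        rcases Nat.eq_zero_or_pos (j':ℕ) with h0 | h0
        · exact absurd (Fin.ext h0) hj'
        · omega)]
      simp) (by intro habs; exact absurd (Finset.mem_univ _) habs)] at hco
    have e1 : Lv n i (((⟨0, hn1⟩ : Fin (n-1)):ℕ)+1) ⟨0, h0n⟩ - Lv n i 0 ⟨0, h0n⟩
        = dd n (sA n i) := by
      rw [show (((⟨0, hn1⟩ : Fin (n-1)):ℕ)+1) = 1 from rfl]
      rw [Lv_val n i 1 0 h0n, Lv_val n i 0 0 h0n, if_pos rfl, if_pos rfl]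
      rw [av_succ]
      simp
    have hμ0 : μ ⟨0, hn1⟩ * (Lv n i (((⟨0, hn1⟩ : Fin (n-1)):ℕ)+1) ⟨0, h0n⟩
        - Lv n i 0 ⟨0, h0n⟩) = 0 := by
      simpa [Pi.sub_apply] using hco
    rw [e1] at hμ0
    exact (mul_eq_zero.mp hμ0).resolve_right (dd_ne n hn (sA n i))
  intro j
  by_cases hj1 : 1 ≤ (j:ℕ)
  · exact hstep1 j hj1
  · have : j = ⟨0, hn1⟩ := by
      apply Fin.ext
      show (j:ℕ) = 0
      omega
    rw [this]
    exact hstep0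

lemma ker_eq_span_diff (n : ℕ) (hn : 2 ≤ n) {i : ℕ} (hi : i < n-1) :
    Submodule.span ℝ (Set.range fun j : Fin (n-1) => Lv n i ((j:ℕ)+1) - Lv n i 0)
      = LinearMap.ker (Fl n i) := by
  have hmem : ∀ j < n, Lv n i j - Lv n i 0 ∈ LinearMap.ker (Fl n i) := by
    intro j hj
    rw [LinearMap.mem_ker, map_sub, Fl_apply, Fl_apply,
      pair_L n hn hi hj, pair_L n hn hi (by omega : 0 < n)]
    ring
  apply Submodule.eq_of_le_of_finrank_le
  · rw [Submodule.span_le]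
    rintro _ ⟨j, rfl⟩
    exact hmem ((j:ℕ)+1) (by omega)
  · have hr1 : Module.finrank ℝ (LinearMap.ker (Fl n i)) = n - 1 := by
      have hrn := LinearMap.finrank_range_add_finrank_ker (Fl n i)
      rw [LinearMap.range_eq_top.mpr (Fl_surj n hn hi), finrank_top,
        Module.finrank_self, Module.finrank_fin_fun] at hrn
      omega
    have hr2 : Module.finrank ℝ
        (Submodule.span ℝ (Set.range fun j : Fin (n-1) => Lv n i ((j:ℕ)+1) - Lv n i 0))
          = n - 1 := by
      rw [finrank_span_eq_card (diff_li n hn hi), Fintype.card_fin]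
    rw [hr1, hr2]

lemma mk'_shift (n : ℕ) {p q : Fin n → ℝ} {W : Submodule ℝ (Fin n → ℝ)}
    (h : q -ᵥ p ∈ W) :
    AffineSubspace.mk' p W = AffineSubspace.mk' q W := by
  ext z
  rw [AffineSubspace.mem_mk', AffineSubspace.mem_mk']
  constructor
  · intro hz
    have := Submodule.sub_mem W hz h
    simpa [vsub_eq_sub] using this
  · intro hz
    have := Submodule.add_mem W hz h
    simpa [vsub_eq_sub, sub_add_sub_cancel] using this

lemma span_eq (n : ℕ) (hn : 2 ≤ n) {i : ℕ} (hi : i < n-1) :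
    affineSpan ℝ (Set.range fun j : Fin n => Lv n i (j:ℕ))
      = AffineSubspace.mk' (Lv n i 0) (LinearMap.ker (Fl n i)) := by
  have h0n : 0 < n := by omega
  have hmem : ∀ j < n, Lv n i j - Lv n i 0 ∈ LinearMap.ker (Fl n i) := by
    intro j hj
    rw [LinearMap.mem_ker, map_sub, Fl_apply, Fl_apply,
      pair_L n hn hi hj, pair_L n hn hi h0n]
    ring
  apply le_antisymm
  · rw [affineSpan_le]
    rintro _ ⟨j, rfl⟩
    rw [SetLike.mem_coe, AffineSubspace.mem_mk']
    simpa [vsub_eq_sub] using hmem (j:ℕ) j.isLt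
  · intro z hz
    rw [AffineSubspace.mem_mk'] at hz
    have hL0 : Lv n i 0 ∈ affineSpan ℝ (Set.range fun j : Fin n => Lv n i (j:ℕ)) := by
      apply subset_affineSpan
      exact ⟨⟨0, h0n⟩, rfl⟩
    have hdir : z -ᵥ Lv n i 0 ∈
        (affineSpan ℝ (Set.range fun j : Fin n => Lv n i (j:ℕ))).direction := by
      rw [direction_affineSpan]
      have hle : LinearMap.ker (Fl n i)
          ≤ vectorSpan ℝ (Set.range fun j : Fin n => Lv n i (j:ℕ)) := by
        rw [← ker_eq_span_diff n hn hi, Submodule.span_le]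
        rintro _ ⟨j, rfl⟩
        have h1 : Lv n i ((j:ℕ)+1) ∈ Set.range fun j : Fin n => Lv n i (j:ℕ) :=
          ⟨⟨(j:ℕ)+1, by omega⟩, rfl⟩
        have h2 : Lv n i 0 ∈ Set.range fun j : Fin n => Lv n i (j:ℕ) := ⟨⟨0, h0n⟩, rfl⟩
        have := vsub_mem_vectorSpan ℝ h1 h2
        simpa [vsub_eq_sub] using this
      exact hle hz
    have := AffineSubspace.vadd_mem_of_mem_direction hdir hL0
    simpa [vsub_vadd] using this


-- chunk 8 : polygon properties
lemma Pv0 (n : ℕ) (k : ZMod (2*n)) : Pv n k 0 = av n ((k.val + (2*n-1))/2) := rfl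

lemma Pv1 (n : ℕ) (k : ZMod (2*n)) : Pv n k 1 = av n (k.val/2 + sg n) := rfl

lemma axis (n : ℕ) (hn : 2 ≤ n) : IsAxisAligned2 n (Pv n) := by
  haveI : NeZero (2*n) := ⟨by omega⟩
  intro i
  have hval : i.val < 2*n := ZMod.val_lt i
  have hv1 : (1 : ZMod (2*n)).val = 1 := by
    rw [← Nat.cast_one, ZMod.val_natCast_of_lt (by omega)]
  have hadd : (i + 1).val = (i.val + 1) % (2*n) := by rw [ZMod.val_add, hv1]
  constructor
  · intro heven
    obtain ⟨m, hm⟩ := heven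
    have h1 : (i+1).val = i.val + 1 := by
      rw [hadd, Nat.mod_eq_of_lt (by omega)]
    rw [Pi.sub_apply, Pv1, Pv1, h1, show (i.val+1)/2 = i.val/2 by omega]
    ring
  · intro hodd
    rw [Nat.even_iff] at hodd
    rw [Pi.sub_apply, Pv0, Pv0]
    by_cases hw : i.val + 1 < 2*n
    · have h1 : (i+1).val = i.val + 1 := by
        rw [hadd, Nat.mod_eq_of_lt hw]
      rw [h1, show (i.val + 1 + (2*n-1))/2 = (i.val + (2*n-1))/2 by omega]
      ring
    · have hieq : i.val = 2*n - 1 := by omega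
      have h1 : (i+1).val = 0 := by
        rw [hadd, show i.val + 1 = 2*n by omega, Nat.mod_self]
      rw [h1, hieq]
      rw [show (0 + (2*n-1))/2 = n-1 by omega,
        show (2*n-1 + (2*n-1))/2 = (n-1) + n*1 by omega,
        av_add_mul]
      ring

lemma lift0 (n : ℕ) (hn : 2 ≤ n) (i j : ℕ) (h0 : 0 < n) :
    Lv n i j ⟨0, h0⟩ = Pv n ((i + 2*j : ℕ) : ZMod (2*n)) 0 := by
  haveI : NeZero (2*n) := ⟨by omega⟩
  rw [Pv0, ZMod.val_natCast]
  rw [Lv_val n i j 0 h0, if_pos rfl]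
  set x := i + 2*j with hxdef
  have hx := Nat.div_add_mod x (2*n)
  rw [mul_assoc] at hx
  set m := n * (x / (2*n)) with hmdef
  set r := x % (2*n) with hrdef
  have e1 : sA n i + j = (x + (2*n-1))/2 := by unfold sA; omega
  have e2 : (x + (2*n-1))/2 = (r + (2*n-1))/2 + m := by omega
  rw [e1, e2, hmdef, av_add_mul]

lemma lift1 (n : ℕ) (hn : 2 ≤ n) (i j : ℕ) (h1 : 1 < n) :
    Lv n i j ⟨1, h1⟩ = Pv n ((i + 2*j : ℕ) : ZMod (2*n)) 1 := by
  haveI : NeZero (2*n) := ⟨by omega⟩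
  rw [Pv1, ZMod.val_natCast]
  rw [Lv_val n i j 1 h1, if_neg (by omega), if_pos rfl]
  set x := i + 2*j with hxdef
  have hx := Nat.div_add_mod x (2*n)
  rw [mul_assoc] at hx
  set m := n * (x / (2*n)) with hmdef
  set r := x % (2*n) with hrdef
  have e1 : sB n i + j = r/2 + sg n + m := by unfold sB; omega
  rw [e1, hmdef, av_add_mul]


end GPL

/-- **Lemma (existence of a good parallel lifting).** For every `n ≥ 2` there exist an
axis-aligned `2n`-gon `P` and a parallel lifting `L(i,j) ∈ ℝⁿ` of the sequences
`A_i(j) = P(i + 2j)` (`0 ≤ i ≤ n-2`, `0 ≤ j ≤ n-1`) such that the affine spans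
`|Ã_i| = affineSpan {L(i,0), …, L(i,n-1)}` are hyperplanes in general position: for every
nonempty `S ⊆ {0, …, n-2}` the intersection `⋂_{i ∈ S} |Ã_i|` is a nonempty affine subspace
of dimension `n - |S|`. -/
theorem exists_good_parallel_lifting
    (n : ℕ) (hn : 2 ≤ n) :
    ∃ (P : ZMod (2 * n) → (Fin 2 → ℝ)) (L : ℕ → ℕ → (Fin n → ℝ)),
      IsAxisAligned2 n P ∧
      (∀ i ≤ n - 2, ∀ j ≤ n - 1,
        L i j ⟨0, by omega⟩ = P ((i + 2 * j : ℕ) : ZMod (2 * n)) 0 ∧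
        L i j ⟨1, by omega⟩ = P ((i + 2 * j : ℕ) : ZMod (2 * n)) 1) ∧
      (∀ i ≤ n - 2, ∀ i' ≤ n - 2, ∀ j ≤ n - 1, ∀ t : Fin n,
        2 ≤ (t : ℕ) → L i j t = L i' j t) ∧
      (∀ S : Finset ℕ, S ⊆ Finset.range (n - 1) → S.Nonempty →
        ((⨅ i ∈ S, affineSpan ℝ (Set.range fun j : Fin n => L i (j : ℕ)) :
            AffineSubspace ℝ (Fin n → ℝ)) : Set (Fin n → ℝ)).Nonempty ∧
        Module.finrank ℝ
          (⨅ i ∈ S, affineSpan ℝ (Set.range fun j : Fin n => L i (j : ℕ)) :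
            AffineSubspace ℝ (Fin n → ℝ)).direction = n - S.card) := by
  classical
  refine ⟨GPL.Pv n, GPL.Lv n, GPL.axis n hn, ?_, ?_, ?_⟩
  · intro i _ j _
    exact ⟨GPL.lift0 n hn i j (by omega), GPL.lift1 n hn i j (by omega)⟩
  · intro i _ i' _ j _ t ht
    show GPL.Lv n i j t = GPL.Lv n i' j t
    unfold GPL.Lv
    have h0 : ¬((t:ℕ) = 0) := by omega
    have h1 : ¬((t:ℕ) = 1) := by omega
    rw [if_neg h0, if_neg h0, if_neg h1, if_neg h1]
  · intro S hS hSne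
    have hSlt : ∀ i ∈ S, i < n - 1 := fun i hi => Finset.mem_range.mp (hS hi)
    obtain ⟨x₀, hx₀⟩ := GPL.exists_sol n hn (GPL.cc n) S hSlt
    set Φ : (Fin n → ℝ) →ₗ[ℝ] (↥S → ℝ) :=
      LinearMap.pi (fun i : ↥S => GPL.Fl n (i:ℕ)) with hΦ
    have hspx : ∀ i ∈ S,
        affineSpan ℝ (Set.range fun j : Fin n => GPL.Lv n i (j:ℕ))
          = AffineSubspace.mk' x₀ (LinearMap.ker (GPL.Fl n i)) := by
      intro i hi
      rw [GPL.span_eq n hn (hSlt i hi)]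
      apply GPL.mk'_shift n
      rw [LinearMap.mem_ker,
        show x₀ -ᵥ GPL.Lv n i 0 = x₀ - GPL.Lv n i 0 from rfl,
        map_sub, GPL.Fl_apply, GPL.Fl_apply, hx₀ i hi,
        GPL.pair_L n hn (hSlt i hi) (by omega : 0 < n)]
      ring
    have hiInf : (⨅ i ∈ S, affineSpan ℝ (Set.range fun j : Fin n => GPL.Lv n i (j:ℕ)) :
          AffineSubspace ℝ (Fin n → ℝ))
        = AffineSubspace.mk' x₀ (LinearMap.ker Φ) := by
      apply le_antisymm
      · intro z hz
        have hz' : ∀ i ∈ S, z ∈ AffineSubspace.mk' x₀ (LinearMap.ker (GPL.Fl n i)) := by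
          intro i hi
          have hle : (⨅ i ∈ S, affineSpan ℝ (Set.range fun j : Fin n => GPL.Lv n i (j:ℕ)) :
                AffineSubspace ℝ (Fin n → ℝ))
              ≤ affineSpan ℝ (Set.range fun j : Fin n => GPL.Lv n i (j:ℕ)) :=
            iInf₂_le i hi
          exact (hspx i hi) ▸ (hle hz)
        rw [AffineSubspace.mem_mk', LinearMap.mem_ker]
        funext si
        have h1 := hz' si.1 si.2
        rw [AffineSubspace.mem_mk', LinearMap.mem_ker] at h1
        simpa [hΦ, LinearMap.pi_apply] using h1
      · apply le_iInf₂
        intro i hi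
        rw [hspx i hi]
        intro z hz
        rw [AffineSubspace.mem_mk', LinearMap.mem_ker] at hz
        rw [AffineSubspace.mem_mk', LinearMap.mem_ker]
        have := congrFun hz ⟨i, hi⟩
        simpa [hΦ, LinearMap.pi_apply] using this
    constructor
    · rw [hiInf]
      exact ⟨x₀, AffineSubspace.self_mem_mk' x₀ _⟩
    · rw [hiInf, AffineSubspace.direction_mk']
      have hsurj : Function.Surjective Φ := by
        intro y
        obtain ⟨x, hx⟩ := GPL.exists_sol n hn
          (fun i => if h : i ∈ S then y ⟨i, h⟩ else 0) S hSlt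
        refine ⟨x, ?_⟩
        funext si
        have h1 := hx si.1 si.2
        rw [dif_pos si.2] at h1
        simpa [hΦ, LinearMap.pi_apply, GPL.Fl_apply] using h1
      have hrn := LinearMap.finrank_range_add_finrank_ker Φ
      rw [LinearMap.range_eq_top.mpr hsurj, finrank_top, Module.finrank_fin_fun] at hrn
      have hcard : Module.finrank ℝ (↥S → ℝ) = S.card := by
        rw [Module.finrank_pi, Fintype.card_coe]
      rw [hcard] at hrn
      omega
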